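/- Let C be a small category, K a Grothendieck topology on C, and ŷ : C ⥤ Sheaf K (Type) the composite of the Yoneda embedding with sheafification. Let D := { c ∈ C | ŷ(c) is not an initial object of Sheaf K (Type) }. Then: (i) D is a cosieve in C (if d ∈ D and there is a morphism d ⟶ c, then c ∈ D); (ii) every K-sheaf, regarded as a presheaf on C, is a sheaf for the topology J_D in which a sieve on c is covering iff it contains every morphism from an object of D; equivalently, for every K-sheaf F and every c ∉ D the set F(c) is a singleton; (iii) for the initial object ⊥ of Sheaf K (Type) and every d ∈ D, the set (underlying presheaf of ⊥)(d) is empty. (Hence the inclusion of any subtopos of a presheaf topos factors as a dominant embedding into the classifying topos of an essentially algebraic theory with falsum.) -/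

import Mathlib

universe u

open CategoryTheory Limits Opposite

/-- The Grothendieck topology associated to a set of objects `D` of `C`, in which a sieve
on `c` is covering iff it contains every morphism from an object of `D`. (When `D` is a
cosieve, this presents the closed complement of `D` in the presheaf topos on `C`.) -/
def cosieveTopology (C : Type u) [SmallCategory C] (D : Set C) :
    GrothendieckTopology C where
  sieves c := {S | ∀ (d : C) (g : d ⟶ c), d ∈ D → S g}
  top_mem' := fun _ _ _ _ => trivial
  pullback_stable' := fun _ _ S f hS d g hd => hS d (g ≫ f) hd
  transitive' := fun _ S hS R hR d g hd => by
    simpa using hR (hS d g hd) d (𝟙 d) hd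

/-- The inclusion of any subtopos of a presheaf topos factors as a dominant embedding
into the classifying topos of an essentially algebraic theory with falsum: with
`D = {c | ŷ(c) is not initial}` for the sheafified Yoneda embedding `ŷ`, (i) `D` is a
cosieve; (ii) every `K`-sheaf is a sheaf for the cosieve topology `J_D`, equivalently it
takes singleton values outside `D`; (iii) the initial sheaf is empty on `D`. -/
theorem statement10 {C : Type u} [SmallCategory C] (K : GrothendieckTopology C)
    (D : Set C)
    (hDdef : D =
      {c | ¬ Nonempty (IsInitial ((presheafToSheaf K (Type u)).obj (yoneda.obj c)))}) :
    (∀ {d c : C}, d ∈ D → (d ⟶ c) → c ∈ D) ∧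
    (∀ F : Sheaf K (Type u), Presheaf.IsSheaf (cosieveTopology C D) F.val) ∧
    (∀ (F : Sheaf K (Type u)) (c : C), c ∉ D →
      Nonempty (Unique (F.val.obj (op c)))) ∧
    (∀ (Z : Sheaf K (Type u)), IsInitial Z →
      ∀ d ∈ D, IsEmpty (Z.val.obj (op d))) := by
  -- any object mapping to an initial sheaf is itself initial (strictness, via CCC)
  have hstrict : ∀ {X Z : Sheaf K (Type u)}, IsInitial Z → (X ⟶ Z) →
      Nonempty (IsInitial X) := by
    intro X Z hZ f
    haveI : HasInitial (Sheaf K (Type u)) := hZ.hasInitial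
    have i : Z ≅ ⊥_ (Sheaf K (Type u)) := hZ.uniqueUpToIso initialIsInitial
    exact ⟨initialIsInitial.ofIso (asIso (f ≫ i.hom)).symm⟩
  -- the adjunction/Yoneda equivalence
  have e : ∀ (F : Sheaf K (Type u)) (c : C),
      ((presheafToSheaf K (Type u)).obj (yoneda.obj c) ⟶ F) ≃ F.val.obj (op c) :=
    fun F c => ((sheafificationAdjunction K (Type u)).homEquiv _ _).trans yonedaEquiv
  -- (i) D is a cosieve
  have hcos : ∀ {d c : C}, d ∈ D → (d ⟶ c) → c ∈ D := by
    intro d c hd f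
    rw [hDdef] at hd ⊢
    intro hc
    obtain ⟨hc⟩ := hc
    exact hd (hstrict hc ((presheafToSheaf K (Type u)).map (yoneda.map f)))
  -- (iii) singleton values outside D
  have hsing : ∀ (F : Sheaf K (Type u)) (c : C), c ∉ D →
      Nonempty (Unique (F.val.obj (op c))) := by
    intro F c hc
    rw [hDdef] at hc
    obtain ⟨hI⟩ := not_not.mp hc
    haveI : Unique ((presheafToSheaf K (Type u)).obj (yoneda.obj c) ⟶ F) :=
      ⟨⟨hI.to F⟩, fun f => hI.hom_ext f _⟩
    exact ⟨(e F c).symm.unique⟩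
  refine ⟨fun hd f => hcos hd f, ?_, hsing, ?_⟩
  · -- (ii) every K-sheaf is a sheaf for the cosieve topology
    intro F
    rw [isSheaf_iff_isSheaf_of_type]
    intro c S hS x hx
    by_cases hc : c ∈ D
    · have : S = ⊤ := Sieve.id_mem_iff_eq_top.mp (hS c (𝟙 c) hc)
      subst this
      exact Presieve.isSheafFor_top_sieve F.val x hx
    · obtain ⟨hu⟩ := hsing F c hc
      haveI := hu
      refine ⟨default, fun e' g hg => ?_, fun t _ => Subsingleton.elim _ _⟩
      have he' : e' ∉ D := fun h => hc (hcos h g)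
      obtain ⟨hu'⟩ := hsing F e' he'
      haveI := hu'
      exact Subsingleton.elim _ _
  · -- (iv) the initial sheaf is empty on D
    intro Z hZ d hd
    constructor
    intro z
    rw [hDdef] at hd
    exact hd (hstrict hZ ((e Z d).symm z))
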